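/- Let X and Y be normed linear spaces, F : X ⇒ Y a set-valued mapping, and (x̄,ȳ) ∈ gph F. If (0,0) ∉ Cr₀F(x̄,ȳ), then lim_{ρ↓0} inf{ max{ |∂F|^a_ρ(x,y), ‖y−ȳ‖/‖x−x̄‖ } : (x,y) ∈ gph F, x ∉ F⁻¹(ȳ), ‖x−x̄‖ < ρ, ‖y−ȳ‖ < ρ } > 0. -/

import Mathlib

open Filter Metric Topology ENNReal

variable {X Y : Type*} [NormedAddCommGroup X] [NormedSpace ℝ X]
  [NormedAddCommGroup Y] [NormedSpace ℝ Y]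

/-- The Fréchet normal cone to `Ω` at `p` (empty when `p ∉ Ω`), in the equivalent ε-form. -/
def frNormalCone {E : Type*} [NormedAddCommGroup E] [NormedSpace ℝ E]
    (Ω : Set E) (p : E) : Set (E →L[ℝ] ℝ) :=
  {l | p ∈ Ω ∧ ∀ ε : ℝ, 0 < ε → ∀ᶠ q in 𝓝[Ω \ {p}] p, l (q - p) ≤ ε * ‖q - p‖}

/-- The Fréchet coderivative of `F` at `(x,y) ∈ gph F`:
`D*F(x,y)(y*) := {x* : (x*,−y*) ∈ N_{gph F}(x,y)}`. -/
def coderiv (F : X → Set Y) (x : X) (y : Y) (q : Y →L[ℝ] ℝ) : Set (X →L[ℝ] ℝ) :=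
  {l | l.coprod (-q) ∈ frNormalCone {p : X × Y | p.2 ∈ F p.1} (x, y)}

/-- The duality mapping `J(v) := {y* : ‖y*‖ = 1, ⟨y*,v⟩ = ‖v‖}`. -/
def dualityMap (v : Y) : Set (Y →L[ℝ] ℝ) := {q | ‖q‖ = 1 ∧ q v = ‖v‖}

/-- The approximate subdifferential ρ-slope of `F` at `(x,y) ∈ gph F` (for `y ≠ ȳ`):
`|∂F|^a_ρ(x,y) := liminf_{v→y−ȳ} inf {‖x*‖ : x* ∈ D*F(x,y)(J(v) + ρB*)}` (`inf ∅ = +∞`). -/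
noncomputable def aSdSlopeF (F : X → Set Y) (y₀ : Y) (ρ : ℝ) (x : X) (y : Y) : ℝ≥0∞ :=
  Filter.liminf
    (fun v : Y =>
      ⨅ (l : X →L[ℝ] ℝ)
        (_ : ∃ q j : Y →L[ℝ] ℝ, j ∈ dualityMap v ∧ ‖q - j‖ ≤ ρ ∧ l ∈ coderiv F x y q),
          (‖l‖₊ : ℝ≥0∞))
    (𝓝 (y - y₀))

/-- The limit set `Cr₀F(x̄,ȳ)`: all `(v,x*) ∈ Y × X*` for which there exist sequences
`t_k ↓ 0`, `(v_k, x_k*) → (v, x*)` and `(u_k, y_k*) ∈ S_X × S_{Y*}` such that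
`x_k* ∈ D*F(x̄ + t_k u_k, ȳ + t_k v_k)(y_k*)` for all `k`. -/
def Cr0 (F : X → Set Y) (x₀ : X) (y₀ : Y) : Set (Y × (X →L[ℝ] ℝ)) :=
  {w | ∃ (t : ℕ → ℝ) (v : ℕ → Y) (l : ℕ → X →L[ℝ] ℝ) (u : ℕ → X) (q : ℕ → Y →L[ℝ] ℝ),
    (∀ k, 0 < t k) ∧ Tendsto t atTop (𝓝 0) ∧
    Tendsto v atTop (𝓝 w.1) ∧ Tendsto l atTop (𝓝 w.2) ∧
    ∀ k, ‖u k‖ = 1 ∧ ‖q k‖ = 1 ∧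
      l k ∈ coderiv F (x₀ + t k • u k) (y₀ + t k • v k) (q k)}


lemma smul_mem_frNormalCone {E : Type*} [NormedAddCommGroup E] [NormedSpace ℝ E]
    {Ω : Set E} {p : E} {L : E →L[ℝ] ℝ} {c : ℝ} (hc : 0 < c)
    (hL : L ∈ frNormalCone Ω p) : c • L ∈ frNormalCone Ω p := by
  refine ⟨hL.1, fun ε hε => ?_⟩
  filter_upwards [hL.2 (ε / c) (div_pos hε hc)] with q hq
  have h1 : c * L (q - p) ≤ c * (ε / c * ‖q - p‖) :=
    mul_le_mul_of_nonneg_left hq hc.le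
  have h2 : c * (ε / c * ‖q - p‖) = ε * ‖q - p‖ := by
    field_simp
  simpa [ContinuousLinearMap.smul_apply, smul_eq_mul, h2] using h1

lemma coderiv_smul {F : X → Set Y} {x : X} {y : Y} {q : Y →L[ℝ] ℝ}
    {l : X →L[ℝ] ℝ} {c : ℝ} (hc : 0 < c) (hl : l ∈ coderiv F x y q) :
    c • l ∈ coderiv F x y (c • q) := by
  have heq : (c • l).coprod (-(c • q)) = c • (l.coprod (-q)) := by
    ext p <;>
      simp [ContinuousLinearMap.coprod_apply, ContinuousLinearMap.comp_apply,
        ContinuousLinearMap.inl_apply, ContinuousLinearMap.inr_apply,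
        ContinuousLinearMap.smul_apply, smul_eq_mul, mul_add]
  unfold coderiv at hl ⊢
  rw [Set.mem_setOf_eq, heq]
  exact smul_mem_frNormalCone hc hl

lemma exists_lt_of_liminf_lt' {α : Type*} {f : Filter α} {u : α → ℝ≥0∞} {c : ℝ≥0∞}
    (h : Filter.liminf u f < c) : ∃ a, u a < c := by
  by_contra hcon
  push_neg at hcon
  have hle : c ≤ Filter.liminf u f := by
    rw [Filter.liminf_eq]
    exact le_sSup (Filter.Eventually.of_forall hcon)
  exact absurd h (not_lt.mpr hle)

lemma aux_tendsto : Tendsto (fun k : ℕ => (1 : ℝ) / (k + 2)) atTop (𝓝 0) := by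
  have h1 : Tendsto (fun k : ℕ => ((k : ℝ) + 2)) atTop atTop :=
    tendsto_atTop_add_const_right _ 2 tendsto_natCast_atTop_atTop
  simpa [one_div, Pi.inv_def] using h1.inv_tendsto_atTop

/-- if `(0,0) ∉ Cr₀F(x̄,ȳ)`, then
`lim_{ρ↓0} inf {max {|∂F|^a_ρ(x,y), ‖y−ȳ‖/‖x−x̄‖} : (x,y) ∈ gph F, x ∉ F⁻¹(ȳ),
‖x−x̄‖ < ρ, ‖y−ȳ‖ < ρ} > 0` (the limit being a supremum by monotonicity; `inf ∅ = +∞`). -/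
theorem cr0_implies_slope_pos (F : X → Set Y) (x₀ : X) (y₀ : Y)
    (hgph : y₀ ∈ F x₀)
    (hCr : ((0 : Y), (0 : X →L[ℝ] ℝ)) ∉ Cr0 F x₀ y₀) :
    0 < ⨆ (ρ : ℝ) (_ : 0 < ρ),
        ⨅ (p : X × Y)
          (_ : p.2 ∈ F p.1 ∧ y₀ ∉ F p.1 ∧ ‖p.1 - x₀‖ < ρ ∧ ‖p.2 - y₀‖ < ρ),
            max (aSdSlopeF F y₀ ρ p.1 p.2)
              (ENNReal.ofReal ‖p.2 - y₀‖ / ENNReal.ofReal ‖p.1 - x₀‖) := by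
  by_contra hsup
  push_neg at hsup
  rw [le_zero_iff] at hsup
  apply hCr
  -- key existence claim for each k
  have key : ∀ k : ℕ, ∃ (x : X) (y : Y) (l : X →L[ℝ] ℝ) (q : Y →L[ℝ] ℝ),
      y₀ ∉ F x ∧ ‖x - x₀‖ < 1 / (k + 2) ∧
      ‖y - y₀‖ < (1 / (k + 2)) * ‖x - x₀‖ ∧
      ‖q‖ = 1 ∧ ‖l‖ ≤ 2 / (k + 2) ∧ l ∈ coderiv F x y q := by
    intro k
    set ε : ℝ := 1 / (k + 2) with hεdef
    have hεpos : 0 < ε := by positivity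
    have hεle : ε ≤ 1 / 2 := by
      rw [hεdef]
      apply div_le_div_of_nonneg_left (by norm_num) (by norm_num)
      have : (0 : ℝ) ≤ (k : ℝ) := Nat.cast_nonneg k
      linarith
    have hI : (⨅ (p : X × Y)
        (_ : p.2 ∈ F p.1 ∧ y₀ ∉ F p.1 ∧ ‖p.1 - x₀‖ < ε ∧ ‖p.2 - y₀‖ < ε),
          max (aSdSlopeF F y₀ ε p.1 p.2)
            (ENNReal.ofReal ‖p.2 - y₀‖ / ENNReal.ofReal ‖p.1 - x₀‖)) = 0 := by
      have h1 := ENNReal.iSup_eq_zero.mp hsup ε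
      exact ENNReal.iSup_eq_zero.mp h1 hεpos
    have hlt : (⨅ (p : X × Y)
        (_ : p.2 ∈ F p.1 ∧ y₀ ∉ F p.1 ∧ ‖p.1 - x₀‖ < ε ∧ ‖p.2 - y₀‖ < ε),
          max (aSdSlopeF F y₀ ε p.1 p.2)
            (ENNReal.ofReal ‖p.2 - y₀‖ / ENNReal.ofReal ‖p.1 - x₀‖))
          < ENNReal.ofReal ε := by
      rw [hI]
      exact ENNReal.ofReal_pos.mpr hεpos
    obtain ⟨p, hp⟩ := iInf_lt_iff.mp hlt
    obtain ⟨⟨hpF, hpny, hpx, hpy⟩, hplt⟩ := iInf_lt_iff.mp hp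
    rw [max_lt_iff] at hplt
    obtain ⟨hslope, hratio⟩ := hplt
    -- p.1 ≠ x₀
    have hxne : p.1 ≠ x₀ := fun h => hpny (h ▸ hgph)
    have htpos : 0 < ‖p.1 - x₀‖ := by
      rw [norm_pos_iff, sub_ne_zero]; exact hxne
    -- ratio inequality
    have hrat' : ‖p.2 - y₀‖ < ε * ‖p.1 - x₀‖ := by
      rw [ENNReal.div_lt_iff (Or.inl (by simpa [ENNReal.ofReal_eq_zero, not_le] using htpos))
        (Or.inl ENNReal.ofReal_ne_top), ← ENNReal.ofReal_mul hεpos.le] at hratio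
      exact (ENNReal.ofReal_lt_ofReal_iff (by positivity)).mp hratio
    -- slope: extract l, q
    obtain ⟨v, hv⟩ := exists_lt_of_liminf_lt' hslope
    obtain ⟨l, hl⟩ := iInf_lt_iff.mp hv
    obtain ⟨⟨q, j, hj, hqj, hcod⟩, hln⟩ := iInf_lt_iff.mp hl
    have hlnorm : ‖l‖ < ε := by
      rw [← enorm_eq_nnnorm, ← ofReal_norm] at hln
      exact (ENNReal.ofReal_lt_ofReal_iff hεpos).mp hln
    -- norm of q is close to 1
    have hqlb : 1 - ε ≤ ‖q‖ := by
      have h1 : ‖j‖ - ‖q‖ ≤ ‖j - q‖ := norm_sub_norm_le j q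
      rw [hj.1, norm_sub_rev] at h1
      linarith
    have hqpos : 0 < ‖q‖ := by linarith
    refine ⟨p.1, p.2, ‖q‖⁻¹ • l, ‖q‖⁻¹ • q, hpny, hpx, hrat', ?_, ?_, ?_⟩
    · exact norm_smul_inv_norm (𝕜 := ℝ) (norm_pos_iff.mp hqpos)
    · have hns := norm_smul (α := ℝ) (‖q‖⁻¹) l
      rw [hns, norm_inv, norm_norm]
      have hq2 : (2 : ℝ)⁻¹ ≤ ‖q‖ := by linarith
      have hmc : ‖q‖ * ‖q‖⁻¹ = 1 := mul_inv_cancel₀ hqpos.ne'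
      have hinv : ‖q‖⁻¹ ≤ 2 := by nlinarith [inv_pos.mpr hqpos]
      calc ‖q‖⁻¹ * ‖l‖ ≤ 2 * ‖l‖ := by
            apply mul_le_mul_of_nonneg_right hinv (norm_nonneg _)
        _ ≤ 2 * ε := by nlinarith [norm_nonneg l]
        _ = 2 / (k + 2) := by rw [hεdef]; ring
    · exact coderiv_smul (inv_pos.mpr hqpos) hcod
  choose xs ys ls qs hny hx hyx hqn hln hcod using key
  have htpos : ∀ k, 0 < ‖xs k - x₀‖ := fun k => by
    rw [norm_pos_iff, sub_ne_zero]
    exact fun h => hny k (h ▸ hgph)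
  refine ⟨fun k => ‖xs k - x₀‖, fun k => ‖xs k - x₀‖⁻¹ • (ys k - y₀), ls,
    fun k => ‖xs k - x₀‖⁻¹ • (xs k - x₀), qs, htpos, ?_, ?_, ?_,
    fun k => ⟨?_, hqn k, ?_⟩⟩
  · exact squeeze_zero (fun k => (htpos k).le) (fun k => (hx k).le) aux_tendsto
  · apply squeeze_zero_norm (a := fun k : ℕ => (1 : ℝ) / (k + 2)) _ aux_tendsto
    intro k
    have hns := norm_smul (α := ℝ) (‖xs k - x₀‖⁻¹) (ys k - y₀)
    rw [hns, norm_inv, norm_norm]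
    have h2 : ‖xs k - x₀‖⁻¹ * ‖ys k - y₀‖
        ≤ ‖xs k - x₀‖⁻¹ * ((1 / (k + 2)) * ‖xs k - x₀‖) :=
      mul_le_mul_of_nonneg_left (hyx k).le (inv_nonneg.mpr (htpos k).le)
    calc ‖xs k - x₀‖⁻¹ * ‖ys k - y₀‖
        ≤ ‖xs k - x₀‖⁻¹ * ((1 / (k + 2)) * ‖xs k - x₀‖) := h2
      _ = 1 / ((k : ℝ) + 2) := by field_simp [(htpos k).ne']
  · exact squeeze_zero_norm (fun k => hln k)
      (by simpa [mul_one_div, div_eq_mul_inv] using aux_tendsto.const_mul 2)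
  · have hns := norm_smul (α := ℝ) (‖xs k - x₀‖⁻¹) (xs k - x₀)
    rw [hns, norm_inv, norm_norm, inv_mul_cancel₀ (htpos k).ne']
  · have hxeq : x₀ + ‖xs k - x₀‖ • (‖xs k - x₀‖⁻¹ • (xs k - x₀)) = xs k := by
      rw [smul_smul, mul_inv_cancel₀ (htpos k).ne', one_smul, add_sub_cancel]
    have hyeq : y₀ + ‖xs k - x₀‖ • (‖xs k - x₀‖⁻¹ • (ys k - y₀)) = ys k := by
      rw [smul_smul, mul_inv_cancel₀ (htpos k).ne', one_smul, add_sub_cancel]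
    rw [hxeq, hyeq]
    exact hcod k
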